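/- Suppose the law ν₀ of X₀ has a density V₀ : (0,∞) → [0,∞) with ‖V₀‖_∞ := ess sup V₀ < ∞, and suppose that for each t > 0 the law of Z_t is absolutely continuous with respect to Lebesgue measure. Let L be a solution of the McKean–Vlasov problem (MV) and set ν_t(S) := ℙ(X_t ∈ S, t < τ) for Borel sets S ⊆ ℝ. Then for every t > 0 and every Borel set S ⊆ ℝ, ν_t(S) ≤ ‖V₀‖_∞ · Leb(S), where Leb denotes Lebesgue measure; in particular ν_t has a density V_t with ‖V_t‖_∞ ≤ ‖V₀‖_∞. -/

import Mathlib

open MeasureTheory ProbabilityTheory Filter Set Function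
open scoped ENNReal

noncomputable section

variable {Ω : Type*} [MeasureSpace Ω]

/-- The event that the particle `X_s = X₀ + Z_s − α f(L_s)` has reached `(-∞, 0]` by time `t`. -/
def hitBy (X0 : Ω → ℝ) (Z : ℝ → Ω → ℝ) (f : ℝ → ℝ) (α : ℝ) (L : ℝ → ℝ) (t : ℝ) : Set Ω :=
  {ω | ∃ s ∈ Set.Icc (0 : ℝ) t, X0 ω + Z s ω - α * f (L s) ≤ 0}

/-- A solution of the McKean--Vlasov problem (MV). -/
def IsMVSolution (X0 : Ω → ℝ) (Z : ℝ → Ω → ℝ) (f : ℝ → ℝ) (α : ℝ) (L : ℝ → ℝ) : Prop :=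
  MonotoneOn L (Set.Ici 0) ∧ L 0 = 0 ∧ (∀ t, 0 ≤ t → L t ∈ Set.Icc (0 : ℝ) 1) ∧
  (∀ t, 0 ≤ t → ContinuousWithinAt L (Set.Ici t) t) ∧
  (∀ t, 0 ≤ t → L t = ((ℙ : Measure Ω) (hitBy X0 Z f α L t)).toReal)

/-- The sub-probability law `ν_t(S) = ℙ(X_t ∈ S, t < τ)` of the particle killed at the origin:
the law of `X_t` on the event that `X_s > 0` for all `s ∈ [0, t]`. -/
def subLaw (X0 : Ω → ℝ) (Z : ℝ → Ω → ℝ) (f : ℝ → ℝ) (α : ℝ) (L : ℝ → ℝ) (t : ℝ) : Measure ℝ :=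
  Measure.map (fun ω => X0 ω + Z t ω - α * f (L t))
    ((ℙ : Measure Ω).restrict {ω | ∀ s ∈ Set.Icc (0 : ℝ) t, 0 < X0 ω + Z s ω - α * f (L s)})

/-- **(Density bound, cf. (2.3) in the paper.)** If `ν₀` has a density `V₀` with
`‖V₀‖_∞ < ∞` and the law of `Z_t` is absolutely continuous for each `t > 0`, then for every
`t > 0` and Borel `S`, `ν_t(S) ≤ ‖V₀‖_∞ ⬝ Leb(S)`; in particular `ν_t` has a density `V_t`
with `‖V_t‖_∞ ≤ ‖V₀‖_∞`. -/
theorem mv_subLaw_density_bound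
    (hprob : IsProbabilityMeasure (ℙ : Measure Ω))
    (X0 : Ω → ℝ) (hX0meas : Measurable X0) (hX0pos : ∀ ω, 0 < X0 ω)
    (Z : ℝ → Ω → ℝ) (hZmeas : ∀ t, Measurable (Z t))
    (hZcont : ∀ ω, Continuous fun t => Z t ω)
    (hindep : IndepFun X0 (fun ω => fun t => Z t ω) ℙ)
    (habs : ∀ t : ℝ, 0 < t → Measure.map (Z t) (ℙ : Measure Ω) ≪ volume)
    (f : ℝ → ℝ) (hf : ContinuousOn f (Set.Icc 0 1)) (α : ℝ)
    (V₀ : ℝ → ℝ) (hV₀meas : Measurable V₀) (hV₀nonneg : ∀ x, 0 ≤ V₀ x)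
    (hV₀supp : ∀ x ≤ (0 : ℝ), V₀ x = 0)
    (hdens : Measure.map X0 (ℙ : Measure Ω)
      = volume.withDensity fun x => ENNReal.ofReal (V₀ x))
    (hV₀bdd : MemLp V₀ ⊤ volume)
    (L : ℝ → ℝ) (hL : IsMVSolution X0 Z f α L)
    (t : ℝ) (ht : 0 < t) :
    (∀ S : Set ℝ, MeasurableSet S →
        subLaw X0 Z f α L t S ≤ eLpNorm V₀ ⊤ volume * volume S) ∧
    ∃ Vt : ℝ → ℝ, Measurable Vt ∧ (∀ x, 0 ≤ Vt x) ∧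
      subLaw X0 Z f α L t = volume.withDensity (fun x => ENNReal.ofReal (Vt x)) ∧
      eLpNorm Vt ⊤ volume ≤ eLpNorm V₀ ⊤ volume := by
  classical
  set M := eLpNorm V₀ ⊤ volume with hM
  have hMne : M ≠ ∞ := hV₀bdd.2.ne
  -- a.e. bound on the initial density
  have hae : ∀ᵐ x ∂(volume : Measure ℝ), ENNReal.ofReal (V₀ x) ≤ M := by
    filter_upwards [ae_le_eLpNormEssSup (f := V₀) (μ := volume)] with x hx
    rw [← Real.enorm_eq_ofReal (hV₀nonneg x), hM, eLpNorm_exponent_top]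
    exact hx
  -- bound on the initial law
  have hX : ∀ B : Set ℝ, MeasurableSet B → Measure.map X0 ℙ B ≤ M * volume B := by
    intro B hB
    rw [hdens, withDensity_apply _ hB]
    calc ∫⁻ x in B, ENNReal.ofReal (V₀ x) ∂volume
        ≤ ∫⁻ _ in B, M ∂volume := lintegral_mono_ae (ae_restrict_of_ae hae)
      _ = M * volume B := by rw [setLIntegral_const]
  have hZtmeas : Measurable (Z t) := hZmeas t
  haveI : IsProbabilityMeasure (Measure.map (Z t) (ℙ : Measure Ω)) :=
    Measure.isProbabilityMeasure_map hZtmeas.aemeasurable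
  -- independence of `X0` and `Z t`
  have hZt : IndepFun X0 (Z t) ℙ := hindep.comp measurable_id (measurable_pi_apply t)
  have hjoint : Measure.map (fun ω => (X0 ω, Z t ω)) (ℙ : Measure Ω)
      = (Measure.map X0 ℙ).prod (Measure.map (Z t) ℙ) :=
    (indepFun_iff_map_prod_eq_prod_map_map hX0meas.aemeasurable hZtmeas.aemeasurable).mp hZt
  -- bound on the law of the sum
  have hsum : ∀ B : Set ℝ, MeasurableSet B →
      Measure.map (fun ω => X0 ω + Z t ω) (ℙ : Measure Ω) B ≤ M * volume B := by
    intro B hB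
    have hmap : Measure.map (fun ω => X0 ω + Z t ω) (ℙ : Measure Ω)
        = Measure.map (fun p : ℝ × ℝ => p.1 + p.2)
            (Measure.map (fun ω => (X0 ω, Z t ω)) ℙ) := by
      rw [Measure.map_map (by fun_prop) (by fun_prop)]
      rfl
    have hBmeas : MeasurableSet ((fun p : ℝ × ℝ => p.1 + p.2) ⁻¹' B) :=
      (measurable_fst.add measurable_snd) hB
    rw [hmap, hjoint, Measure.map_apply (by fun_prop) hB, Measure.prod_apply_symm hBmeas]
    calc ∫⁻ y, Measure.map X0 ℙ ((fun x => (x, y)) ⁻¹' ((fun p : ℝ × ℝ => p.1 + p.2) ⁻¹' B))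
            ∂(Measure.map (Z t) ℙ)
        ≤ ∫⁻ _, M * volume B ∂(Measure.map (Z t) ℙ) := by
          refine lintegral_mono fun y => ?_
          have hpre : ((fun x => (x, y)) ⁻¹' ((fun p : ℝ × ℝ => p.1 + p.2) ⁻¹' B))
              = (fun x : ℝ => x + y) ⁻¹' B := rfl
          have hBy : MeasurableSet ((fun x : ℝ => x + y) ⁻¹' B) :=
            (measurable_add_const y) hB
          rw [hpre]
          calc Measure.map X0 ℙ ((fun x : ℝ => x + y) ⁻¹' B)
              ≤ M * volume ((fun x : ℝ => x + y) ⁻¹' B) := hX _ hBy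
            _ = M * volume B := by rw [measure_preimage_add_right]
      _ = M * volume B := by simp
  -- bound on the law of the shifted sum
  set c := α * f (L t) with hc
  have hshift : ∀ S : Set ℝ, MeasurableSet S →
      Measure.map (fun ω => X0 ω + Z t ω - c) (ℙ : Measure Ω) S ≤ M * volume S := by
    intro S hS
    have hmap : Measure.map (fun ω => X0 ω + Z t ω - c) (ℙ : Measure Ω)
        = Measure.map (fun x : ℝ => x - c)
            (Measure.map (fun ω => X0 ω + Z t ω) ℙ) := by
      rw [Measure.map_map (by fun_prop) (by fun_prop)]
      rfl
    have hSc : MeasurableSet ((fun x : ℝ => x - c) ⁻¹' S) :=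
      (measurable_sub_const c) hS
    rw [hmap, Measure.map_apply (by fun_prop) hS]
    calc Measure.map (fun ω => X0 ω + Z t ω) ℙ ((fun x : ℝ => x - c) ⁻¹' S)
        ≤ M * volume ((fun x : ℝ => x - c) ⁻¹' S) := hsum _ hSc
      _ = M * volume S := by
          congr 1
          have : (fun x : ℝ => x - c) = fun x : ℝ => x + (-c) := by
            funext x; ring
          rw [this, measure_preimage_add_right]
  -- the sub-law is dominated by the shifted law
  have hsub_le : ∀ S : Set ℝ,
      subLaw X0 Z f α L t S ≤ Measure.map (fun ω => X0 ω + Z t ω - c) (ℙ : Measure Ω) S := by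
    intro S
    have hmono : Measure.map (fun ω => X0 ω + Z t ω - c)
        ((ℙ : Measure Ω).restrict {ω | ∀ s ∈ Set.Icc (0 : ℝ) t, 0 < X0 ω + Z s ω - α * f (L s)})
        ≤ Measure.map (fun ω => X0 ω + Z t ω - c) (ℙ : Measure Ω) :=
      Measure.map_mono Measure.restrict_le_self (by fun_prop)
    exact Measure.le_iff'.mp hmono S
  have part1 : ∀ S : Set ℝ, MeasurableSet S → subLaw X0 Z f α L t S ≤ M * volume S :=
    fun S hS => (hsub_le S).trans (hshift S hS)
  refine ⟨part1, ?_⟩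
  -- Part 2: existence of a bounded density
  set ν := subLaw X0 Z f α L t with hν
  haveI : IsProbabilityMeasure (Measure.map (fun ω => X0 ω + Z t ω - c) (ℙ : Measure Ω)) :=
    Measure.isProbabilityMeasure_map (by fun_prop)
  haveI hfin : IsFiniteMeasure ν := by
    refine ⟨lt_of_le_of_lt ((hsub_le univ).trans ?_) ENNReal.one_lt_top⟩
    exact le_of_eq (measure_univ)
  have hac : ν ≪ volume := by
    refine Measure.AbsolutelyContinuous.mk fun s hs h0 => ?_
    exact le_zero_iff.mp (by simpa [h0] using part1 s hs)
  have hM0 : M ≠ 0 := by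
    intro h
    haveI : IsProbabilityMeasure (Measure.map X0 (ℙ : Measure Ω)) :=
      Measure.isProbabilityMeasure_map hX0meas.aemeasurable
    have h2 := hX univ MeasurableSet.univ
    rw [h, zero_mul] at h2
    simp [measure_univ] at h2
  -- ν ≤ M • volume
  have hνle : ν ≤ M • (volume : Measure ℝ) := by
    refine Measure.le_intro fun s hs _ => ?_
    simpa [Measure.smul_apply, smul_eq_mul] using part1 s hs
  set κ := M⁻¹ • ν with hκdef
  have hκle : κ ≤ (volume : Measure ℝ) := by
    refine Measure.le_intro fun s hs _ => ?_
    have h1 := Measure.le_iff'.mp hνle s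
    calc κ s = M⁻¹ * ν s := by simp [hκdef, Measure.smul_apply, smul_eq_mul]
      _ ≤ M⁻¹ * (M * volume s) := by
          exact mul_le_mul_right (by simpa [Measure.smul_apply, smul_eq_mul] using h1) _
      _ = (M⁻¹ * M) * volume s := by ring
      _ = volume s := by rw [ENNReal.inv_mul_cancel hM0 hMne, one_mul]
  haveI hκfin : IsFiniteMeasure κ := by
    constructor
    rw [hκdef, Measure.smul_apply, smul_eq_mul]
    exact ENNReal.mul_lt_top (by simp [ENNReal.inv_lt_top, pos_iff_ne_zero, hM0])
      (measure_lt_top ν univ)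
  have hνκ : ν = M • κ := by
    rw [hκdef, smul_smul, ENNReal.mul_inv_cancel hM0 hMne, one_smul]
  have h1 : κ.rnDeriv volume ≤ᵐ[volume] 1 := Measure.rnDeriv_le_one_of_le hκle
  have h2 : ν.rnDeriv volume =ᵐ[volume] M • κ.rnDeriv volume := by
    nth_rewrite 1 [hνκ]
    exact Measure.rnDeriv_smul_left_of_ne_top κ volume hMne
  have hbound : ν.rnDeriv volume ≤ᵐ[volume] fun _ => M := by
    filter_upwards [h1, h2] with x hx1 hx2
    rw [hx2]
    calc M • κ.rnDeriv volume x ≤ M * 1 := by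
          simpa [smul_eq_mul] using mul_le_mul_right hx1 M
      _ = M := mul_one M
  refine ⟨fun x => (ν.rnDeriv volume x).toReal,
    (Measure.measurable_rnDeriv ν volume).ennreal_toReal,
    fun x => ENNReal.toReal_nonneg, ?_, ?_⟩
  · have h3 : (fun x => ENNReal.ofReal ((ν.rnDeriv volume x).toReal))
        =ᵐ[volume] ν.rnDeriv volume := by
      filter_upwards [Measure.rnDeriv_lt_top ν volume] with x hx
      exact ENNReal.ofReal_toReal hx.ne
    rw [withDensity_congr_ae h3, Measure.withDensity_rnDeriv_eq ν volume hac]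
  · rw [eLpNorm_exponent_top, eLpNormEssSup]
    refine essSup_le_of_ae_le M ?_
    filter_upwards [hbound] with x hx
    calc (‖(ν.rnDeriv volume x).toReal‖₊ : ℝ≥0∞)
        = ENNReal.ofReal ((ν.rnDeriv volume x).toReal) :=
          Real.enorm_eq_ofReal ENNReal.toReal_nonneg
      _ ≤ ν.rnDeriv volume x := ENNReal.ofReal_toReal_le
      _ ≤ M := hx
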